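/- The set F_d of d×d factorisable bistochastic matrices is star-shaped with respect to the flat matrix W_d: if B is factorisable, then for every λ ∈ [0,1] the matrix (1−λ)B + λW_d is also factorisable. -/

import Mathlib

/-- A `d × d` real matrix is bistochastic (doubly stochastic) if all its entries are
non-negative and each row and each column sums to `1`. -/
def Bistochastic {d : ℕ} (B : Matrix (Fin d) (Fin d) ℝ) : Prop :=
  (∀ j k, 0 ≤ B j k) ∧ (∀ j, ∑ k, B j k = 1) ∧ (∀ k, ∑ j, B j k = 1)

/-- A bistochastic matrix is bracelet if for every pair of columns `k, l` and every `j₀`,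
`2 √(B j₀ k * B j₀ l) ≤ ∑ j, √(B j k * B j l)` (equivalently, twice the maximum is at most
the sum), and the analogous condition holds for every pair of rows. -/
def Bracelet {d : ℕ} (B : Matrix (Fin d) (Fin d) ℝ) : Prop :=
  Bistochastic B ∧
  (∀ k l j₀ : Fin d, 2 * Real.sqrt (B j₀ k * B j₀ l) ≤ ∑ j, Real.sqrt (B j k * B j l)) ∧
  (∀ j k l₀ : Fin d, 2 * Real.sqrt (B j l₀ * B k l₀) ≤ ∑ l, Real.sqrt (B j l * B k l))

/-- A `d × d` bistochastic matrix `E` is elementary if `E k k = 1` for at least `d - 2`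
indices `k`. -/
def Elementary {d : ℕ} (E : Matrix (Fin d) (Fin d) ℝ) : Prop :=
  Bistochastic E ∧ ∃ S : Finset (Fin d), d - 2 ≤ S.card ∧ ∀ k ∈ S, E k k = 1

/-- The set `F_d` of factorisable bistochastic matrices: the topological closure of the set
of finite products of elementary bistochastic matrices (the identity being the empty
product). -/
def Factorisable {d : ℕ} (B : Matrix (Fin d) (Fin d) ℝ) : Prop :=
  B ∈ closure { M : Matrix (Fin d) (Fin d) ℝ |
    ∃ L : List (Matrix (Fin d) (Fin d) ℝ), (∀ E ∈ L, Elementary E) ∧ M = L.prod }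

/-- The flat (van der Waerden) matrix `W_d` with all entries equal to `1/d`. -/
noncomputable def flatMatrix (d : ℕ) : Matrix (Fin d) (Fin d) ℝ := Matrix.of fun _ _ => (1 : ℝ) / d

namespace StarAux

/-! ### General norm estimates in a normed ring -/

section ListNorm
variable {A : Type*} [NormedRing A] [NormOneClass A]

lemma norm_pow_le_one {a : A} (ha : ‖a‖ ≤ 1) : ∀ n : ℕ, ‖a ^ n‖ ≤ 1
  | 0 => by simp
  | n + 1 => by
    rw [pow_succ]
    calc ‖a ^ n * a‖ ≤ ‖a ^ n‖ * ‖a‖ := norm_mul_le _ _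
      _ ≤ 1 * 1 := mul_le_mul (norm_pow_le_one ha n) ha (norm_nonneg _) zero_le_one
      _ = 1 := by ring

lemma list_norm_sum_le' (L : List A) : ‖L.sum‖ ≤ (L.map (fun x => ‖x‖)).sum := by
  induction L with
  | nil => simp
  | cons X L ih =>
    rw [List.sum_cons, List.map_cons, List.sum_cons]
    exact (norm_add_le _ _).trans (add_le_add le_rfl ih)

lemma sum_map_norm_nonneg (L : List A) : 0 ≤ (L.map (fun X => ‖1 - X‖)).sum :=
  List.sum_nonneg (by simp only [List.mem_map]; rintro x ⟨y, _, rfl⟩; exact norm_nonneg _)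

lemma list_prod_sub_one_norm (L : List A) (h : ∀ X ∈ L, ‖X‖ ≤ 1) :
    ‖L.prod - 1‖ ≤ (L.map (fun X => ‖1 - X‖)).sum := by
  induction L with
  | nil => simp
  | cons X L ih =>
    have hX : ‖X‖ ≤ 1 := h X (List.mem_cons_self)
    have ihL := ih (fun Y hY => h Y (List.mem_cons_of_mem _ hY))
    have key : X * L.prod - 1 = X * (L.prod - 1) + (X - 1) := by noncomm_ring
    rw [List.prod_cons, List.map_cons, List.sum_cons, key]
    calc ‖X * (L.prod - 1) + (X - 1)‖ ≤ ‖X * (L.prod - 1)‖ + ‖X - 1‖ := norm_add_le _ _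
      _ ≤ ‖X‖ * ‖L.prod - 1‖ + ‖X - 1‖ := add_le_add (norm_mul_le _ _) le_rfl
      _ ≤ 1 * (L.map (fun X => ‖1 - X‖)).sum + ‖1 - X‖ := by
          rw [norm_sub_rev X 1]
          exact add_le_add (mul_le_mul hX ihL (norm_nonneg _) zero_le_one) le_rfl
      _ = ‖1 - X‖ + (L.map (fun X => ‖1 - X‖)).sum := by ring

lemma list_prod_expand_norm (L : List A) (h : ∀ X ∈ L, ‖X‖ ≤ 1) :
    ‖L.prod - (1 - (L.map (fun X => 1 - X)).sum)‖ ≤ ((L.map (fun X => ‖1 - X‖)).sum) ^ 2 := by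
  induction L with
  | nil => simp
  | cons X L ih =>
    have hX : ‖X‖ ≤ 1 := h X (List.mem_cons_self)
    have ihL := ih (fun Y hY => h Y (List.mem_cons_of_mem _ hY))
    set Sg : A := (L.map (fun X => 1 - X)).sum with hSg
    set s : ℝ := (L.map (fun X => ‖1 - X‖)).sum with hs
    have hs0 : 0 ≤ s := sum_map_norm_nonneg L
    have hSgnorm : ‖Sg‖ ≤ s := by
      rw [hSg, hs]
      calc ‖(L.map (fun X => 1 - X)).sum‖ ≤ ((L.map (fun X => 1 - X)).map (fun x => ‖x‖)).sum :=
            list_norm_sum_le' _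
        _ = (L.map (fun X => ‖1 - X‖)).sum := by rw [List.map_map]; rfl
    have key : X * L.prod - (1 - ((1 - X) + Sg)) = X * (L.prod - (1 - Sg)) + (1 - X) * Sg := by
      noncomm_ring
    rw [List.prod_cons, List.map_cons, List.sum_cons, List.map_cons, List.sum_cons, key]
    calc ‖X * (L.prod - (1 - Sg)) + (1 - X) * Sg‖
        ≤ ‖X‖ * ‖L.prod - (1 - Sg)‖ + ‖1 - X‖ * ‖Sg‖ :=
          (norm_add_le _ _).trans (by gcongr <;> exact norm_mul_le _ _)
      _ ≤ 1 * s ^ 2 + ‖1 - X‖ * s :=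
          add_le_add (mul_le_mul hX ihL (norm_nonneg _) zero_le_one)
            (mul_le_mul le_rfl hSgnorm (norm_nonneg _) (norm_nonneg _))
      _ ≤ (‖1 - X‖ + s) ^ 2 := by nlinarith [norm_nonneg (1 - X)]

lemma pow_sub_pow_norm_le {a b : A} (ha : ‖a‖ ≤ 1) (hb : ‖b‖ ≤ 1) (n : ℕ) :
    ‖a ^ n - b ^ n‖ ≤ n * ‖a - b‖ := by
  induction n with
  | zero => simp
  | succ n ih =>
    have key : a ^ (n + 1) - b ^ (n + 1) = a * (a ^ n - b ^ n) + (a - b) * b ^ n := by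
      rw [pow_succ', pow_succ']
      noncomm_ring
    rw [key]
    calc ‖a * (a ^ n - b ^ n) + (a - b) * b ^ n‖
        ≤ ‖a‖ * ‖a ^ n - b ^ n‖ + ‖a - b‖ * ‖b ^ n‖ :=
          (norm_add_le _ _).trans (by gcongr <;> exact norm_mul_le _ _)
      _ ≤ 1 * (n * ‖a - b‖) + ‖a - b‖ * 1 :=
          add_le_add (mul_le_mul ha ih (norm_nonneg _) zero_le_one)
            (mul_le_mul le_rfl (norm_pow_le_one hb n) (norm_nonneg _) (norm_nonneg _))
      _ = (n + 1 : ℕ) * ‖a - b‖ := by push_cast; ring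

end ListNorm

/-! ### Elementary pair-averaging matrices -/

open Matrix

variable {d : ℕ}

noncomputable def swapM (i j : Fin d) : Matrix (Fin d) (Fin d) ℝ :=
  Matrix.of fun k l => if Equiv.swap i j k = l then (1:ℝ) else 0

noncomputable def elemM (i j : Fin d) (t : ℝ) : Matrix (Fin d) (Fin d) ℝ :=
  (1 - t) • 1 + t • swapM i j

lemma swapM_apply (i j k l : Fin d) :
    swapM i j k l = if Equiv.swap i j k = l then (1:ℝ) else 0 := rfl

lemma swapM_bistochastic (i j : Fin d) : Bistochastic (swapM i j) := by
  refine ⟨fun k l => ?_, fun k => ?_, fun l => ?_⟩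
  · rw [swapM_apply]; positivity
  · simp [swapM_apply]
  · simp [swapM_apply, Equiv.apply_eq_iff_eq_symm_apply, Finset.sum_ite_eq]

lemma one_bistochastic : Bistochastic (1 : Matrix (Fin d) (Fin d) ℝ) := by
  refine ⟨fun k l => ?_, fun k => ?_, fun l => ?_⟩ <;>
    simp [Matrix.one_apply, Finset.sum_ite_eq]
  · positivity

lemma flat_bistochastic (hd : 0 < d) : Bistochastic (flatMatrix d) := by
  have hdR : (0:ℝ) < (d:ℝ) := by exact_mod_cast hd
  have hent : ∀ k l : Fin d, flatMatrix d k l = 1 / (d:ℝ) := fun _ _ => rfl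
  refine ⟨fun k l => by rw [hent]; positivity, fun k => ?_, fun l => ?_⟩ <;>
    · simp only [hent, Finset.sum_const, Finset.card_univ, Fintype.card_fin, nsmul_eq_mul]
      field_simp

lemma convex_bistochastic {A B : Matrix (Fin d) (Fin d) ℝ} (hA : Bistochastic A)
    (hB : Bistochastic B) {t : ℝ} (ht : t ∈ Set.Icc (0:ℝ) 1) :
    Bistochastic ((1 - t) • A + t • B) := by
  obtain ⟨ht0, ht1⟩ := ht
  refine ⟨fun k l => ?_, fun k => ?_, fun l => ?_⟩
  · have := hA.1 k l; have := hB.1 k l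
    simp only [Matrix.add_apply, Matrix.smul_apply, smul_eq_mul]
    nlinarith
  · simp [Finset.sum_add_distrib, ← Finset.mul_sum, hA.2.1 k, hB.2.1 k]
  · simp [Finset.sum_add_distrib, ← Finset.mul_sum, hA.2.2 l, hB.2.2 l]

lemma elemM_bistochastic (i j : Fin d) {t : ℝ} (ht : t ∈ Set.Icc (0:ℝ) 1) :
    Bistochastic (elemM i j t) :=
  convex_bistochastic one_bistochastic (swapM_bistochastic i j) ht

lemma elemM_elementary (i j : Fin d) {t : ℝ} (ht : t ∈ Set.Icc (0:ℝ) 1) :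
    Elementary (elemM i j t) := by
  refine ⟨elemM_bistochastic i j ht, ({i, j} : Finset (Fin d))ᶜ, ?_, fun k hk => ?_⟩
  · rw [Finset.card_compl, Fintype.card_fin]
    have : ({i, j} : Finset (Fin d)).card ≤ 2 := Finset.card_insert_le _ _ |>.trans (by simp)
    omega
  · simp only [Finset.mem_compl, Finset.mem_insert, Finset.mem_singleton, not_or] at hk
    have h1 : Equiv.swap i j k = k := Equiv.swap_apply_of_ne_of_ne hk.1 hk.2
    simp [elemM, Matrix.add_apply, Matrix.smul_apply, Matrix.one_apply, swapM_apply, h1]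

lemma swap_sum_entry (k l : Fin d) :
    ∑ i : Fin d, ∑ j : Fin d, swapM i j k l
      = (if k = l then (d:ℝ)^2 - 2*d + 2 else 2) := by
  have hd : 0 < d := k.pos
  have hcard : ((Finset.univ.erase k).card : ℝ) = (d : ℝ) - 1 := by
    rw [Finset.card_erase_of_mem (Finset.mem_univ _)]
    simp [Nat.cast_sub hd]
  have hinner : ∀ i : Fin d, ∑ j : Fin d, swapM i j k l
      = if i = k then (1:ℝ)
        else ((if i = l then (1:ℝ) else 0) + ((d:ℝ)-1) * (if k = l then 1 else 0)) := by
    intro i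
    by_cases hik : i = k
    · subst hik
      simp [swapM_apply, Equiv.swap_apply_left, Finset.sum_ite_eq]
    · rw [if_neg hik]
      have hval : ∀ j : Fin d, swapM i j k l
          = if j = k then (if i = l then (1:ℝ) else 0) else (if k = l then 1 else 0) := by
        intro j
        by_cases hjk : j = k
        · subst hjk; simp [swapM_apply, Equiv.swap_apply_right]
        · rw [swapM_apply, if_neg hjk,
            Equiv.swap_apply_of_ne_of_ne (Ne.symm hik) (Ne.symm hjk)]
      rw [Finset.sum_congr rfl fun j _ => hval j,
        ← Finset.add_sum_erase _ _ (Finset.mem_univ k), if_pos rfl]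
      rw [Finset.sum_congr rfl (fun j hj => if_neg (Finset.ne_of_mem_erase hj)),
        Finset.sum_const, nsmul_eq_mul, hcard]
  rw [Finset.sum_congr rfl fun i _ => hinner i,
    ← Finset.add_sum_erase _ _ (Finset.mem_univ k), if_pos rfl]
  rw [Finset.sum_congr rfl (fun i hi => if_neg (Finset.ne_of_mem_erase hi)),
    Finset.sum_add_distrib, Finset.sum_const, nsmul_eq_mul, hcard]
  by_cases hkl : k = l
  · subst hkl
    have : ∑ i ∈ Finset.univ.erase k, (if i = k then (1:ℝ) else 0) = 0 :=
      Finset.sum_eq_zero fun i hi => if_neg (Finset.ne_of_mem_erase hi)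
    simp only [this, eq_self_iff_true, if_true]
    ring
  · have : ∑ i ∈ Finset.univ.erase k, (if i = l then (1:ℝ) else 0) = 1 := by
      rw [Finset.sum_ite_eq' (Finset.univ.erase k) l fun _ => (1:ℝ)]
      rw [if_pos (Finset.mem_erase.mpr ⟨fun h => hkl h.symm, Finset.mem_univ _⟩)]
    simp only [this, if_neg hkl]
    ring

lemma one_sub_elemM (t : ℝ) (p : Fin d × Fin d) :
    (1 : Matrix (Fin d) (Fin d) ℝ) - elemM p.1 p.2 t
      = t • ((1 : Matrix (Fin d) (Fin d) ℝ) - swapM p.1 p.2) := by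
  unfold elemM; module

lemma sum_one_sub_elem (t : ℝ) (hd : 0 < d) :
    ∑ p : Fin d × Fin d, ((1 : Matrix (Fin d) (Fin d) ℝ) - elemM p.1 p.2 t)
      = (2 * d * t) • ((1 : Matrix (Fin d) (Fin d) ℝ) - flatMatrix d) := by
  rw [Finset.sum_congr rfl fun p _ => one_sub_elemM t p, ← Finset.smul_sum]
  ext k l
  have hdR : (0:ℝ) < (d:ℝ) := by exact_mod_cast hd
  have hsum : (∑ p : Fin d × Fin d, ((1 : Matrix (Fin d) (Fin d) ℝ) - swapM p.1 p.2)) k l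
      = (d:ℝ) * (d:ℝ) * (if k = l then 1 else 0)
        - (if k = l then (d:ℝ)^2 - 2*d + 2 else 2) := by
    rw [Matrix.sum_apply]
    have he : ∀ p : Fin d × Fin d, ((1 : Matrix (Fin d) (Fin d) ℝ) - swapM p.1 p.2) k l
        = (if k = l then (1:ℝ) else 0) - swapM p.1 p.2 k l := by
      intro p; simp [Matrix.sub_apply, Matrix.one_apply]
    rw [Finset.sum_congr rfl fun p _ => he p, Finset.sum_sub_distrib, Finset.sum_const,
      Fintype.sum_prod_type, swap_sum_entry k l, nsmul_eq_mul]
    norm_num [Fintype.card_prod]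
  rw [Matrix.smul_apply, hsum, Matrix.smul_apply, Matrix.sub_apply, Matrix.one_apply]
  have hflat : flatMatrix d k l = 1 / (d:ℝ) := rfl
  rw [hflat]
  have key : (d:ℝ) * (1 / d) = 1 := by field_simp
  by_cases hkl : k = l
  · rw [if_pos hkl, if_pos hkl]
    linear_combination (2*t) * key
  · rw [if_neg hkl, if_neg hkl]
    linear_combination (2*t) * key

/-! ### The interpolation matrices `C_μ = (1-μ)•1 + μ•W` -/

noncomputable def Cmat (d : ℕ) (μ : ℝ) : Matrix (Fin d) (Fin d) ℝ :=
  (1 - μ) • 1 + μ • flatMatrix d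

lemma flat_mul_flat (hd : 0 < d) : flatMatrix d * flatMatrix d = flatMatrix d := by
  have hdR : (0:ℝ) < (d:ℝ) := by exact_mod_cast hd
  ext k l
  rw [Matrix.mul_apply]
  have hent : ∀ k l : Fin d, flatMatrix d k l = 1 / (d:ℝ) := fun _ _ => rfl
  simp only [hent, Finset.sum_const, Finset.card_univ, Fintype.card_fin, nsmul_eq_mul]
  field_simp

lemma Cmat_mul (hd : 0 < d) (a b : ℝ) :
    Cmat d a * Cmat d b = Cmat d (a + b - a * b) := by
  unfold Cmat
  simp only [Matrix.add_mul, Matrix.mul_add, Matrix.smul_mul, Matrix.mul_smul, smul_add,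
    smul_smul, Matrix.one_mul, Matrix.mul_one, flat_mul_flat hd]
  module

lemma Cmat_pow (hd : 0 < d) (μ : ℝ) (n : ℕ) :
    Cmat d μ ^ n = Cmat d (1 - (1 - μ) ^ n) := by
  induction n with
  | zero => simp [Cmat]
  | succ n ih =>
    rw [pow_succ, ih, Cmat_mul hd,
      show 1 - (1-μ)^n + μ - (1 - (1-μ)^n) * μ = 1 - (1-μ)^(n+1) by ring]

lemma Cmat_bistochastic (hd : 0 < d) {μ : ℝ} (hμ : μ ∈ Set.Icc (0:ℝ) 1) :
    Bistochastic (Cmat d μ) :=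
  convex_bistochastic one_bistochastic (flat_bistochastic hd) hμ


/-! ### Norm estimates -/

section Normed

attribute [local instance] Matrix.linftyOpNormedAddCommGroup Matrix.linftyOpNormedRing
  Matrix.linftyOpNormedSpace

lemma list_prod_norm_le_one {A : Type*} [NormedRing A] [NormOneClass A]
    (L : List A) (h : ∀ X ∈ L, ‖X‖ ≤ 1) : ‖L.prod‖ ≤ 1 := by
  induction L with
  | nil => simp
  | cons X L ih =>
    rw [List.prod_cons]
    calc ‖X * L.prod‖ ≤ ‖X‖ * ‖L.prod‖ := norm_mul_le _ _
      _ ≤ 1 * 1 := mul_le_mul (h X (List.mem_cons_self))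
          (ih fun Y hY => h Y (List.mem_cons_of_mem _ hY)) (norm_nonneg _) zero_le_one
      _ = 1 := by ring

lemma bistochastic_norm_le_one {M : Matrix (Fin d) (Fin d) ℝ} (h : Bistochastic M) :
    ‖M‖ ≤ 1 := by
  rw [Matrix.linfty_opNorm_def]
  have hsup : ((Finset.univ : Finset (Fin d)).sup fun i => ∑ j, ‖M i j‖₊) ≤ 1 := by
    refine Finset.sup_le fun i _ => le_of_eq ?_
    have he : ∀ j, ‖M i j‖₊ = Real.toNNReal (M i j) := fun j =>
      (Real.toNNReal_eq_nnnorm_of_nonneg (h.1 i j)).symm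
    rw [Finset.sum_congr rfl fun j _ => he j,
      ← Real.toNNReal_sum_of_nonneg (fun j _ => h.1 i j), h.2.1 i, Real.toNNReal_one]
  exact_mod_cast hsup

noncomputable def facList (d : ℕ) (μ : ℝ) : List (Matrix (Fin d) (Fin d) ℝ) :=
  (Finset.univ : Finset (Fin d × Fin d)).toList.map fun p => elemM p.1 p.2 (μ / (2 * d))

lemma t_mem (hd : 0 < d) {μ : ℝ} (hμ : μ ∈ Set.Icc (0:ℝ) 1) :
    μ / (2 * d) ∈ Set.Icc (0:ℝ) 1 := by
  have hdR : (0:ℝ) < (d:ℝ) := by exact_mod_cast hd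
  constructor
  · exact div_nonneg hμ.1 (by positivity)
  · rw [div_le_one (by positivity)]
    have h1 : (1:ℝ) ≤ (d:ℝ) := by exact_mod_cast hd
    linarith [hμ.2]

lemma facList_elementary (hd : 0 < d) {μ : ℝ} (hμ : μ ∈ Set.Icc (0:ℝ) 1) :
    ∀ E ∈ facList d μ, Elementary E := by
  intro E hE
  rw [facList, List.mem_map] at hE
  obtain ⟨p, _, rfl⟩ := hE
  exact elemM_elementary p.1 p.2 (t_mem hd hμ)

lemma facList_one_sub_sum (hd : 0 < d) (μ : ℝ) :
    ((facList d μ).map fun X => 1 - X).sum = μ • (1 - flatMatrix d) := by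
  have hdR : (0:ℝ) < (d:ℝ) := by exact_mod_cast hd
  rw [facList, List.map_map, Finset.sum_map_toList, Function.comp_def,
    sum_one_sub_elem (μ / (2 * d)) hd, show 2 * (d:ℝ) * (μ / (2 * d)) = μ by field_simp]

lemma facList_norm_sum_le (hd : 0 < d) {μ : ℝ} (hμ : μ ∈ Set.Icc (0:ℝ) 1) :
    ((facList d μ).map fun X => ‖1 - X‖).sum ≤ μ * d := by
  have hdR : (0:ℝ) < (d:ℝ) := by exact_mod_cast hd
  have ht0 : 0 ≤ μ / (2 * d) := div_nonneg hμ.1 (by positivity)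
  have hbound : ∀ x ∈ (facList d μ).map fun X => ‖1 - X‖, x ≤ μ / (2 * d) * 2 := by
    intro x hx
    rw [List.mem_map] at hx; obtain ⟨X, hX, rfl⟩ := hx
    rw [facList, List.mem_map] at hX; obtain ⟨p, _, rfl⟩ := hX
    rw [one_sub_elemM, norm_smul]
    have h2 : ‖(1 : Matrix (Fin d) (Fin d) ℝ) - swapM p.1 p.2‖ ≤ 2 := by
      calc ‖(1 : Matrix (Fin d) (Fin d) ℝ) - swapM p.1 p.2‖
          ≤ ‖(1 : Matrix (Fin d) (Fin d) ℝ)‖ + ‖swapM p.1 p.2‖ := norm_sub_le _ _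
        _ ≤ 1 + 1 := add_le_add (bistochastic_norm_le_one one_bistochastic)
            (bistochastic_norm_le_one (swapM_bistochastic _ _))
        _ = 2 := by norm_num
    rw [Real.norm_of_nonneg ht0]
    exact mul_le_mul le_rfl h2 (norm_nonneg _) ht0
  calc ((facList d μ).map fun X => ‖1 - X‖).sum
      ≤ ((facList d μ).map fun X => ‖1 - X‖).length • (μ / (2 * d) * 2) :=
        List.sum_le_card_nsmul _ _ hbound
    _ = (d * d : ℕ) • (μ / (2 * d) * 2) := by
        simp [facList, Finset.length_toList]
    _ = μ * d := by
        rw [nsmul_eq_mul]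
        push_cast
        field_simp

lemma prod_sub_Cmat (hd : 0 < d) {μ : ℝ} (hμ : μ ∈ Set.Icc (0:ℝ) 1) :
    ‖(facList d μ).prod - Cmat d μ‖ ≤ (μ * d) ^ 2 := by
  haveI : Nonempty (Fin d) := ⟨⟨0, hd⟩⟩
  have hn1 : ∀ X ∈ facList d μ, ‖X‖ ≤ 1 := fun X hX =>
    bistochastic_norm_le_one ((facList_elementary hd hμ X hX).1)
  have h := list_prod_expand_norm (facList d μ) hn1
  rw [facList_one_sub_sum hd μ] at h
  have hC : (1 : Matrix (Fin d) (Fin d) ℝ) - μ • (1 - flatMatrix d) = Cmat d μ := by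
    unfold Cmat; module
  rw [hC] at h
  exact h.trans (pow_le_pow_left₀ (sum_map_norm_nonneg _) (facList_norm_sum_le hd hμ) 2)

lemma Cmat_mem (hd : 0 < d) {lam : ℝ} (hl0 : 0 ≤ lam) (hl1 : lam < 1) :
    Cmat d lam ∈ closure { M : Matrix (Fin d) (Fin d) ℝ |
      ∃ L : List (Matrix (Fin d) (Fin d) ℝ), (∀ E ∈ L, Elementary E) ∧ M = L.prod } := by
  haveI : Nonempty (Fin d) := ⟨⟨0, hd⟩⟩
  have hdR : (0:ℝ) < (d:ℝ) := by exact_mod_cast hd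
  set c : ℝ := 1 - lam with hc
  have hc0 : 0 < c := by simp only [hc]; linarith
  have hc1 : c ≤ 1 := by simp only [hc]; linarith
  set μ : ℕ → ℝ := fun n => 1 - c ^ (1 / (n:ℝ)) with hμdef
  have hμmem : ∀ n : ℕ, μ n ∈ Set.Icc (0:ℝ) 1 := by
    intro n
    have hle : c ^ (1/(n:ℝ)) ≤ 1 := Real.rpow_le_one hc0.le hc1 (by positivity)
    have hge : 0 ≤ c ^ (1/(n:ℝ)) := Real.rpow_nonneg hc0.le _
    exact ⟨by simp only [hμdef]; linarith, by simp only [hμdef]; linarith⟩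
  set f : ℕ → Matrix (Fin d) (Fin d) ℝ := fun n => (facList d (μ n)).prod ^ n with hfdef
  have hfS : ∀ n, f n ∈ { M : Matrix (Fin d) (Fin d) ℝ |
      ∃ L : List (Matrix (Fin d) (Fin d) ℝ), (∀ E ∈ L, Elementary E) ∧ M = L.prod } := by
    intro n
    refine ⟨(List.replicate n (facList d (μ n))).flatten, fun E hE => ?_, ?_⟩
    · rw [List.mem_flatten] at hE
      obtain ⟨l, hl, hEl⟩ := hE
      rw [List.eq_of_mem_replicate hl] at hEl
      exact facList_elementary hd (hμmem n) E hEl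
    · rw [List.prod_flatten, List.map_replicate, List.prod_replicate]
  have hbound : ∀ n : ℕ, 1 ≤ n → ‖f n - Cmat d lam‖ ≤ (Real.log c)^2 * d^2 / n := by
    intro n hn
    have hnR : (0:ℝ) < (n:ℝ) := by exact_mod_cast hn
    have hμn : μ n ≤ -Real.log c / n := by
      have hexp : Real.log c / n + 1 ≤ Real.exp (Real.log c / n) := Real.add_one_le_exp _
      have hrpow : c ^ (1/(n:ℝ)) = Real.exp (Real.log c * (1/(n:ℝ))) :=
        Real.rpow_def_of_pos hc0 _
      have : Real.log c * (1/(n:ℝ)) = Real.log c / n := by ring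
      rw [this] at hrpow
      simp only [hμdef]
      rw [hrpow, neg_div]
      linarith
    have hCpow : Cmat d (μ n) ^ n = Cmat d lam := by
      rw [Cmat_pow hd]
      have h1 : (1 : ℝ) - μ n = c ^ (1/(n:ℝ)) := by simp [hμdef]
      rw [h1, ← Real.rpow_natCast (c ^ (1/(n:ℝ))) n, ← Real.rpow_mul hc0.le,
        show (1/(n:ℝ)) * n = 1 by field_simp, Real.rpow_one, hc]
      norm_num
    have hQnorm : ‖(facList d (μ n)).prod‖ ≤ 1 :=
      list_prod_norm_le_one _ fun X hX =>
        bistochastic_norm_le_one ((facList_elementary hd (hμmem n) X hX).1)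
    have hCnorm : ‖Cmat d (μ n)‖ ≤ 1 :=
      bistochastic_norm_le_one (Cmat_bistochastic hd (hμmem n))
    have hμ0 : 0 ≤ μ n := (hμmem n).1
    have hlog : 0 ≤ -Real.log c / n := le_trans hμ0 hμn
    calc ‖f n - Cmat d lam‖ = ‖(facList d (μ n)).prod ^ n - Cmat d (μ n) ^ n‖ := by
          rw [hCpow]
      _ ≤ n * ‖(facList d (μ n)).prod - Cmat d (μ n)‖ :=
          pow_sub_pow_norm_le hQnorm hCnorm n
      _ ≤ n * ((μ n * d) ^ 2) := by
          have := prod_sub_Cmat hd (hμmem n)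
          nlinarith [norm_nonneg ((facList d (μ n)).prod - Cmat d (μ n))]
      _ ≤ n * ((-Real.log c / n * d) ^ 2) := by
          have hmul : μ n * d ≤ -Real.log c / n * d :=
            mul_le_mul_of_nonneg_right hμn hdR.le
          have h0 : 0 ≤ μ n * d := mul_nonneg hμ0 hdR.le
          have hsq : (μ n * (d:ℝ)) ^ 2 ≤ (-Real.log c / n * d) ^ 2 :=
            pow_le_pow_left₀ h0 hmul 2
          exact mul_le_mul_of_nonneg_left hsq hnR.le
      _ = (Real.log c)^2 * d^2 / n := by
          field_simp
  have hg : Filter.Tendsto (fun n : ℕ => (Real.log c)^2 * (d:ℝ)^2 / n) Filter.atTop (nhds 0) :=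
    tendsto_const_div_atTop_nhds_zero_nat _
  have hnorm0 : Filter.Tendsto (fun n => ‖f n - Cmat d lam‖) Filter.atTop (nhds 0) :=
    squeeze_zero' (Filter.Eventually.of_forall fun n => norm_nonneg _)
      ((Filter.eventually_ge_atTop 1).mono fun n hn => hbound n hn) hg
  have hf : Filter.Tendsto f Filter.atTop (nhds (Cmat d lam)) :=
    tendsto_iff_norm_sub_tendsto_zero.mpr hnorm0
  exact mem_closure_of_tendsto hf (Filter.Eventually.of_forall hfS)

lemma limit_case (hd : 0 < d) {B : Matrix (Fin d) (Fin d) ℝ}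
    (h : ∀ l : ℝ, 0 ≤ l → l < 1 → Factorisable ((1 - l) • B + l • flatMatrix d)) :
    Factorisable ((1 - (1:ℝ)) • B + (1:ℝ) • flatMatrix d) := by
  set lk : ℕ → ℝ := fun k => 1 - 1/((k:ℝ)+1) with hlk
  set g : ℕ → Matrix (Fin d) (Fin d) ℝ :=
    fun k => (1 - lk k) • B + lk k • flatMatrix d with hgdef
  have hkb : ∀ k : ℕ, (0:ℝ) < 1/((k:ℝ)+1) ∧ 1/((k:ℝ)+1) ≤ 1 := by
    intro k
    constructor
    · positivity
    · rw [div_le_one (by positivity)]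
      have : (0:ℝ) ≤ (k:ℝ) := Nat.cast_nonneg k
      linarith
  have hgF : ∀ k, Factorisable (g k) := fun k =>
    h (lk k) (by simp only [hlk]; linarith [(hkb k).2]) (by simp only [hlk]; linarith [(hkb k).1])
  have hdiff : ∀ k : ℕ, g k - ((1 - (1:ℝ)) • B + (1:ℝ) • flatMatrix d)
      = (1/((k:ℝ)+1)) • (B - flatMatrix d) := by
    intro k
    simp only [hgdef, hlk]
    module
  have hnorm0 : Filter.Tendsto
      (fun k => ‖g k - ((1 - (1:ℝ)) • B + (1:ℝ) • flatMatrix d)‖) Filter.atTop (nhds 0) := by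
    have ht : Filter.Tendsto (fun k : ℕ => 1/((k:ℝ)+1) * ‖B - flatMatrix d‖)
        Filter.atTop (nhds 0) := by
      have := tendsto_one_div_add_atTop_nhds_zero_nat.mul_const ‖B - flatMatrix d‖
      simpa using this
    refine squeeze_zero' (Filter.Eventually.of_forall fun k => norm_nonneg _)
      (Filter.Eventually.of_forall fun k => ?_) ht
    rw [hdiff k, norm_smul, Real.norm_of_nonneg (by positivity : (0:ℝ) ≤ 1/((k:ℝ)+1))]
  have hf : Filter.Tendsto g Filter.atTop (nhds ((1 - (1:ℝ)) • B + (1:ℝ) • flatMatrix d)) :=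
    tendsto_iff_norm_sub_tendsto_zero.mpr hnorm0
  unfold Factorisable
  rw [← closure_closure (s := { M : Matrix (Fin d) (Fin d) ℝ |
    ∃ L : List (Matrix (Fin d) (Fin d) ℝ), (∀ E ∈ L, Elementary E) ∧ M = L.prod })]
  exact mem_closure_of_tendsto hf (Filter.Eventually.of_forall hgF)

end Normed

/-! ### Factorisable matrices: closure properties -/

lemma prod_row_sum : ∀ (L : List (Matrix (Fin d) (Fin d) ℝ)),
    (∀ E ∈ L, Elementary E) → ∀ j, ∑ k, L.prod j k = 1 := by
  intro L
  induction L with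
  | nil => intro _ j; simpa using one_bistochastic.2.1 j
  | cons X L ih =>
    intro h j
    rw [List.prod_cons]
    have hX : ∀ m, ∑ k, L.prod m k = 1 := fun m =>
      ih (fun E hE => h E (List.mem_cons_of_mem _ hE)) m
    calc ∑ k, (X * L.prod) j k = ∑ k, ∑ m, X j m * L.prod m k := by
          simp [Matrix.mul_apply]
      _ = ∑ m, ∑ k, X j m * L.prod m k := Finset.sum_comm
      _ = ∑ m, X j m * ∑ k, L.prod m k := by simp [Finset.mul_sum]
      _ = ∑ m, X j m := by simp [hX]
      _ = 1 := (h X (List.mem_cons_self)).1.2.1 j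

lemma factorisable_row_sum {B : Matrix (Fin d) (Fin d) ℝ} (hB : Factorisable B) :
    ∀ j, ∑ k, B j k = 1 := by
  have hclosed : IsClosed {M : Matrix (Fin d) (Fin d) ℝ | ∀ j, ∑ k, M j k = 1} := by
    have heq : {M : Matrix (Fin d) (Fin d) ℝ | ∀ j, ∑ k, M j k = 1}
        = ⋂ j, {M : Matrix (Fin d) (Fin d) ℝ | ∑ k, M j k = 1} := by
      ext M; simp [Set.mem_iInter]
    rw [heq]
    refine isClosed_iInter fun j => isClosed_eq ?_ continuous_const
    exact continuous_finset_sum _ fun k _ => continuous_id.matrix_elem j k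
  have hsub : { M : Matrix (Fin d) (Fin d) ℝ |
      ∃ L : List (Matrix (Fin d) (Fin d) ℝ), (∀ E ∈ L, Elementary E) ∧ M = L.prod }
      ⊆ {M : Matrix (Fin d) (Fin d) ℝ | ∀ j, ∑ k, M j k = 1} := by
    rintro M ⟨L, hL, rfl⟩
    exact prod_row_sum L hL
  exact closure_minimal hsub hclosed hB

lemma factorisable_mul_flat {B : Matrix (Fin d) (Fin d) ℝ} (hB : Factorisable B) :
    B * flatMatrix d = flatMatrix d := by
  ext j l
  rw [Matrix.mul_apply]
  show (∑ m, B j m * (1/(d:ℝ))) = 1/(d:ℝ)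
  rw [← Finset.sum_mul, factorisable_row_sum hB j, one_mul]

lemma factorisable_mul {A B : Matrix (Fin d) (Fin d) ℝ}
    (hA : Factorisable A) (hB : Factorisable B) : Factorisable (A * B) := by
  refine map_mem_closure₂ continuous_mul hA hB ?_
  rintro a ⟨La, hLa, rfl⟩ b ⟨Lb, hLb, rfl⟩
  refine ⟨La ++ Lb, fun E hE => ?_, (List.prod_append).symm⟩
  rcases List.mem_append.mp hE with h | h
  · exact hLa E h
  · exact hLb E h

end StarAux

/-- The set of factorisable bistochastic matrices is star-shaped with respect to the flat
matrix `W_d`: if `B` is factorisable, then for every `λ ∈ [0,1]`, `(1-λ) B + λ W_d` is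
also factorisable. -/
theorem factorisable_starShaped {d : ℕ} (B : Matrix (Fin d) (Fin d) ℝ)
    (hB : Factorisable B) (lam : ℝ) (hlam : lam ∈ Set.Icc (0 : ℝ) 1) :
    Factorisable ((1 - lam) • B + lam • flatMatrix d) := by
  obtain ⟨h0, h1⟩ := hlam
  rcases Nat.eq_zero_or_pos d with hd | hd
  · subst hd
    have hEq : ((1 - lam) • B + lam • flatMatrix 0) = B := by
      ext i j; exact i.elim0
    rw [hEq]; exact hB
  have main : ∀ l : ℝ, 0 ≤ l → l < 1 → Factorisable ((1 - l) • B + l • flatMatrix d) := by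
    intro l hl0 hl1
    have hC : Factorisable (StarAux.Cmat d l) := StarAux.Cmat_mem hd hl0 hl1
    have hmul : Factorisable (B * StarAux.Cmat d l) := StarAux.factorisable_mul hB hC
    have hEq : B * StarAux.Cmat d l = (1 - l) • B + l • flatMatrix d := by
      unfold StarAux.Cmat
      rw [Matrix.mul_add, Matrix.mul_smul, Matrix.mul_smul, Matrix.mul_one,
        StarAux.factorisable_mul_flat hB]
    rwa [hEq] at hmul
  rcases lt_or_eq_of_le h1 with hlt | heq
  · exact main lam h0 hlt
  · rw [heq]
    exact StarAux.limit_case hd main
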